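/- The Choquet-type trace φ_α is monotone on positive semidefinite matrices: if 0 ≤ a ≤ b in Mₙ(ℂ) (Loewner order), then φ_α(a) ≤ φ_α(b). -/

import Mathlib

open Matrix BigOperators Finset
open scoped ComplexOrder

/-- The `i`-th largest eigenvalue (0-indexed) of a Hermitian matrix. -/
noncomputable def eigDesc {n : ℕ} (a : Matrix (Fin n) (Fin n) ℂ) (ha : a.IsHermitian) (i : Fin n) : ℝ :=
  ha.eigenvalues (Tuple.sort ha.eigenvalues i.rev)

/-- Eigenvalues in decreasing order, extended by `0` beyond the size. `eigN a ha i = λ_{i+1}(a)`. -/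
noncomputable def eigN {n : ℕ} (a : Matrix (Fin n) (Fin n) ℂ) (ha : a.IsHermitian) (i : ℕ) : ℝ :=
  if h : i < n then eigDesc a ha ⟨i, h⟩ else 0

/-- The non-linear trace of Choquet type:
`φ_α(a) = ∑_{i=1}^{n-1} (λ_i(a) - λ_{i+1}(a)) α(i) + λ_n(a) α(n)`. -/
noncomputable def choquetTrace {n : ℕ} (α : ℕ → ℝ) (a : Matrix (Fin n) (Fin n) ℂ)
    (ha : a.IsHermitian) : ℝ :=
  ∑ i ∈ Finset.range n, (eigN a ha i - eigN a ha (i + 1)) * α (i + 1)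

/-- Functional calculus of a Hermitian matrix `a` by a function `f : ℝ → ℝ` on its eigenvalues. -/
noncomputable def funCalc {n : ℕ} (f : ℝ → ℝ) (a : Matrix (Fin n) (Fin n) ℂ)
    (ha : a.IsHermitian) : Matrix (Fin n) (Fin n) ℂ :=
  (ha.eigenvectorUnitary : Matrix (Fin n) (Fin n) ℂ) *
    Matrix.diagonal (fun i => (f (ha.eigenvalues i) : ℂ)) *
    star (ha.eigenvectorUnitary : Matrix (Fin n) (Fin n) ℂ)

/-- The absolute value `|a| = (a^* a)^{1/2}` of a matrix. -/
noncomputable def matAbs {n : ℕ} (a : Matrix (Fin n) (Fin n) ℂ) : Matrix (Fin n) (Fin n) ℂ :=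
  ((Matrix.posSemidef_conjTranspose_mul_self a).1.eigenvectorUnitary : Matrix (Fin n) (Fin n) ℂ) *
    Matrix.diagonal ((↑) ∘ Real.sqrt ∘ (Matrix.posSemidef_conjTranspose_mul_self a).1.eigenvalues) *
    (star (Matrix.posSemidef_conjTranspose_mul_self a).1.eigenvectorUnitary : Matrix (Fin n) (Fin n) ℂ)

theorem matAbs_isHermitian {n : ℕ} (a : Matrix (Fin n) (Fin n) ℂ) : (matAbs a).IsHermitian :=
  by
    unfold matAbs
    rw [Matrix.star_eq_conjTranspose]
    refine Matrix.isHermitian_mul_mul_conjTranspose _ ?_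
    refine Matrix.isHermitian_diagonal_of_self_adjoint _ ?_
    ext i
    simp [Complex.conj_ofReal]

section ChoquetAux

/-- Quadratic form of a Hermitian matrix expanded in its eigenbasis. -/
lemma quad_form_eq {n : ℕ} {a : Matrix (Fin n) (Fin n) ℂ} (ha : a.IsHermitian)
    (x : EuclideanSpace ℂ (Fin n)) :
    (star (x : Fin n → ℂ)) ⬝ᵥ (a *ᵥ (x : Fin n → ℂ)) =
      ∑ j, (ha.eigenvalues j : ℂ) * ((‖ha.eigenvectorBasis.repr x j‖^2 : ℝ) : ℂ) := by
  set B := ha.eigenvectorBasis with hB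
  have h1 : (star (x : Fin n → ℂ)) ⬝ᵥ (a *ᵥ (x : Fin n → ℂ)) =
      inner ℂ x (Matrix.toEuclideanLin a x) := by
    rw [EuclideanSpace.inner_eq_star_dotProduct, Matrix.toEuclideanLin_apply]
    rw [WithLp.ofLp_toLp, dotProduct_comm]
  have hTB : ∀ j, Matrix.toEuclideanLin a (B j) = (ha.eigenvalues j : ℂ) • B j := by
    intro j
    rw [Matrix.toEuclideanLin_apply]
    have h := ha.mulVec_eigenvectorBasis j
    apply (WithLp.equiv 2 (Fin n → ℂ)).injective
    simp only [WithLp.equiv_apply, WithLp.ofLp_toLp]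
    rw [show (B j).ofLp = (ha.eigenvectorBasis j).ofLp from rfl, h]
    ext k
    simp only [Pi.smul_apply, WithLp.ofLp_smul]
    simp [Complex.real_smul, smul_eq_mul, hB]
  have h2 : Matrix.toEuclideanLin a x = ∑ j, (B.repr x j * (ha.eigenvalues j : ℂ)) • B j := by
    conv_lhs => rw [← B.sum_repr x]
    rw [map_sum]
    congr 1; ext j
    rw [LinearMap.map_smul, hTB j, smul_smul]
  rw [h1, h2, inner_sum]
  congr 1; ext j
  rw [inner_smul_right]
  have hc : (inner ℂ x (B j) : ℂ) = starRingEnd ℂ (B.repr x j) := by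
    rw [B.repr_apply_apply, ← inner_conj_symm]
  rw [hc]
  have hm : B.repr x j * starRingEnd ℂ (B.repr x j) = ((‖B.repr x j‖^2 : ℝ) : ℂ) := by
    rw [RCLike.mul_conj]; push_cast; rfl
  rw [mul_comm (B.repr x j), mul_assoc, hm]

lemma repr_eq_zero_of_mem_span {n : ℕ} (B : OrthonormalBasis (Fin n) ℂ (EuclideanSpace ℂ (Fin n)))
    (S : Set (Fin n)) {x : EuclideanSpace ℂ (Fin n)}
    (hx : x ∈ Submodule.span ℂ (B '' S)) {j : Fin n} (hj : j ∉ S) : B.repr x j = 0 := by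
  induction hx using Submodule.span_induction with
  | mem y hy =>
    obtain ⟨k, hk, rfl⟩ := hy
    rw [B.repr_self]
    have : j ≠ k := fun h => hj (h ▸ hk)
    simp [EuclideanSpace.single_apply, this]
  | zero => simp
  | add y z _ _ hy hz => simp [map_add, hy, hz]
  | smul c y _ hy => simp [_root_.map_smul, hy]

lemma norm_sq_eq_sum_repr {n : ℕ} (B : OrthonormalBasis (Fin n) ℂ (EuclideanSpace ℂ (Fin n)))
    (x : EuclideanSpace ℂ (Fin n)) : ‖x‖^2 = ∑ j, ‖B.repr x j‖^2 := by
  rw [← B.repr.norm_map x, EuclideanSpace.norm_eq]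
  rw [Real.sq_sqrt]
  positivity

lemma quad_re_eq {n : ℕ} {a : Matrix (Fin n) (Fin n) ℂ} (ha : a.IsHermitian)
    (x : EuclideanSpace ℂ (Fin n)) :
    ((star (x : Fin n → ℂ)) ⬝ᵥ (a *ᵥ (x : Fin n → ℂ))).re =
      ∑ j, ha.eigenvalues j * ‖ha.eigenvectorBasis.repr x j‖^2 := by
  rw [quad_form_eq ha x]
  push_cast
  rw [Complex.re_sum]
  simp [← Complex.ofReal_pow]

lemma quad_ge {n : ℕ} {a : Matrix (Fin n) (Fin n) ℂ} (ha : a.IsHermitian)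
    {S : Set (Fin n)} {c : ℝ} (hc : ∀ j ∈ S, c ≤ ha.eigenvalues j)
    {x : EuclideanSpace ℂ (Fin n)} (hx : x ∈ Submodule.span ℂ (ha.eigenvectorBasis '' S)) :
    c * ‖x‖^2 ≤ ((star (x : Fin n → ℂ)) ⬝ᵥ (a *ᵥ (x : Fin n → ℂ))).re := by
  rw [quad_re_eq ha x, norm_sq_eq_sum_repr ha.eigenvectorBasis x, Finset.mul_sum]
  apply Finset.sum_le_sum
  intro j _
  by_cases hj : j ∈ S
  · exact mul_le_mul_of_nonneg_right (hc j hj) (by positivity)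
  · rw [repr_eq_zero_of_mem_span ha.eigenvectorBasis S hx hj]; simp

lemma quad_le {n : ℕ} {b : Matrix (Fin n) (Fin n) ℂ} (hb : b.IsHermitian)
    {S : Set (Fin n)} {c : ℝ} (hc : ∀ j ∈ S, hb.eigenvalues j ≤ c)
    {x : EuclideanSpace ℂ (Fin n)} (hx : x ∈ Submodule.span ℂ (hb.eigenvectorBasis '' S)) :
    ((star (x : Fin n → ℂ)) ⬝ᵥ (b *ᵥ (x : Fin n → ℂ))).re ≤ c * ‖x‖^2 := by
  rw [quad_re_eq hb x, norm_sq_eq_sum_repr hb.eigenvectorBasis x, Finset.mul_sum]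
  apply Finset.sum_le_sum
  intro j _
  by_cases hj : j ∈ S
  · exact mul_le_mul_of_nonneg_right (hc j hj) (by positivity)
  · rw [repr_eq_zero_of_mem_span hb.eigenvectorBasis S hx hj]; simp

end ChoquetAux

lemma eigDesc_mono {n : ℕ} {a b : Matrix (Fin n) (Fin n) ℂ} (ha : a.IsHermitian)
    (hb : b.IsHermitian) (hab : (b - a).PosSemidef) (i : Fin n) :
    eigDesc a ha i ≤ eigDesc b hb i := by
  have hin : (i : ℕ) < n := i.isLt
  set famA : Fin ((i : ℕ) + 1) → Fin n :=
    fun j => Tuple.sort ha.eigenvalues (Fin.rev (Fin.castLE hin j)) with hfamA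
  set famB : Fin (n - (i : ℕ)) → Fin n :=
    fun p => Tuple.sort hb.eigenvalues (Fin.castLE (Nat.sub_le n i) p) with hfamB
  have hinjA : Function.Injective famA :=
    (Tuple.sort ha.eigenvalues).injective.comp (Fin.rev_injective.comp (Fin.castLE_injective _))
  have hinjB : Function.Injective famB :=
    (Tuple.sort hb.eigenvalues).injective.comp (Fin.castLE_injective _)
  set V := Submodule.span ℂ (ha.eigenvectorBasis '' Set.range famA) with hVdef
  set W := Submodule.span ℂ (hb.eigenvectorBasis '' Set.range famB) with hWdef
  have hV : Module.finrank ℂ V = (i : ℕ) + 1 := by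
    rw [hVdef, show ha.eigenvectorBasis '' Set.range famA
        = Set.range (ha.eigenvectorBasis ∘ famA) from (Set.range_comp _ _).symm,
      finrank_span_eq_card ((ha.eigenvectorBasis.orthonormal.comp famA hinjA).linearIndependent)]
    simp
  have hW : Module.finrank ℂ W = n - (i : ℕ) := by
    rw [hWdef, show hb.eigenvectorBasis '' Set.range famB
        = Set.range (hb.eigenvectorBasis ∘ famB) from (Set.range_comp _ _).symm,
      finrank_span_eq_card ((hb.eigenvectorBasis.orthonormal.comp famB hinjB).linearIndependent)]
    simp
  have hsum := Submodule.finrank_sup_add_finrank_inf_eq V W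
  have hle : Module.finrank ℂ ↥(V ⊔ W) ≤ n := by
    have := Submodule.finrank_le (V ⊔ W)
    rwa [finrank_euclideanSpace_fin] at this
  have hpos : 0 < Module.finrank ℂ ↥(V ⊓ W) := by omega
  have : Nontrivial ↥(V ⊓ W) := Module.finrank_pos_iff.mp hpos
  obtain ⟨⟨x, hxVW⟩, hx0'⟩ := exists_ne (0 : ↥(V ⊓ W))
  have hx0 : x ≠ 0 := by
    intro h; exact hx0' (Subtype.ext h)
  have hxV : x ∈ V := hxVW.1
  have hxW : x ∈ W := hxVW.2
  have hbA : ∀ k ∈ Set.range famA, eigDesc a ha i ≤ ha.eigenvalues k := by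
    rintro k ⟨j, rfl⟩
    exact Tuple.monotone_sort ha.eigenvalues
      (Fin.rev_le_rev.mpr (by simp [Fin.le_def]; omega))
  have hbB : ∀ k ∈ Set.range famB, hb.eigenvalues k ≤ eigDesc b hb i := by
    rintro k ⟨p, rfl⟩
    exact Tuple.monotone_sort hb.eigenvalues
      (by simp [Fin.le_def, Fin.val_rev]; omega)
  have h1 := quad_ge ha hbA hxV
  have h2 := quad_le hb hbB hxW
  have h3 : ((star (x : Fin n → ℂ)) ⬝ᵥ (a *ᵥ (x : Fin n → ℂ))).re ≤
      ((star (x : Fin n → ℂ)) ⬝ᵥ (b *ᵥ (x : Fin n → ℂ))).re := by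
    have h0 := hab.dotProduct_mulVec_nonneg (x : Fin n → ℂ)
    rw [Matrix.sub_mulVec, dotProduct_sub] at h0
    have := (Complex.le_def.mp h0).1
    simp only [Complex.sub_re, Complex.zero_re] at this
    linarith
  have hx2 : (0:ℝ) < ‖x‖^2 := pow_pos (norm_pos_iff.mpr hx0) 2
  exact le_of_mul_le_mul_right (by linarith) hx2

lemma eigN_mono {n : ℕ} {a b : Matrix (Fin n) (Fin n) ℂ} (ha : a.IsHermitian)
    (hb : b.IsHermitian) (hab : (b - a).PosSemidef) (i : ℕ) :
    eigN a ha i ≤ eigN b hb i := by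
  unfold eigN
  by_cases h : i < n
  · simp only [dif_pos h]
    exact eigDesc_mono ha hb hab ⟨i, h⟩
  · simp [dif_neg h]

lemma tele_sum (n : ℕ) (e g : ℕ → ℝ) (he : e n = 0) (hg : g 0 = 0) :
    ∑ i ∈ Finset.range n, (e i - e (i + 1)) * g (i + 1)
      = ∑ i ∈ Finset.range n, e i * (g (i + 1) - g i) := by
  have key : ∑ i ∈ Finset.range n, e (i + 1) * g (i + 1)
      = ∑ i ∈ Finset.range n, e i * g i := by
    have h1 := Finset.sum_range_succ' (fun i => e i * g i) n
    have h2 := Finset.sum_range_succ (fun i => e i * g i) n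
    simp only [hg, he, mul_zero, zero_mul, add_zero] at h1 h2
    rw [h2] at h1
    linarith
  simp only [sub_mul, mul_sub, Finset.sum_sub_distrib]
  rw [key]

/-- the Choquet-type trace is monotone for the Loewner order. -/
theorem stmt1 (n : ℕ) (α : ℕ → ℝ) (hα0 : α 0 = 0)
    (hmono : ∀ i j : ℕ, i ≤ j → j ≤ n → α i ≤ α j)
    (a b : Matrix (Fin n) (Fin n) ℂ) (ha : a.PosSemidef) (hb : b.PosSemidef)
    (hab : (b - a).PosSemidef) :
    choquetTrace α a ha.1 ≤ choquetTrace α b hb.1 := by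
  have hea : eigN a ha.1 n = 0 := by simp [eigN]
  have heb : eigN b hb.1 n = 0 := by simp [eigN]
  unfold choquetTrace
  rw [tele_sum n (eigN a ha.1) α hea hα0, tele_sum n (eigN b hb.1) α heb hα0]
  apply Finset.sum_le_sum
  intro i hi
  have hi' : i + 1 ≤ n := Finset.mem_range.mp hi
  exact mul_le_mul_of_nonneg_right (eigN_mono ha.1 hb.1 hab i)
    (sub_nonneg.mpr (hmono i (i + 1) (Nat.le_succ i) hi'))
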